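/- Soundness of the idle-time insertion rule: let t, s, e be real numbers, let J be a job with [s, e] ⊆ [t, d_J], and let D be the sum of the lengths B_j over all jobs j ≠ J with s ≤ r_j and d_j ≤ e. If D > 0 and t + B_J + D > e, then in every feasible schedule of the job system in which J starts no earlier than t (s_J ≥ t), the start time of J satisfies s_J ≥ s. Hence deferring the release time of J from t to s excludes no feasible schedule among those starting J at or after t. -/

import Mathlib

/-- **Soundness of the idle-time insertion rule.**
Let `t, s, e` be reals, `J` a job of the job system with `[s, e] ⊆ [t, d J]`,
and let `D` be the sum of the lengths `B j` over all jobs `j ≠ J` with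
`s ≤ r j` and `d j ≤ e`.  If `D > 0` and `t + B J + D > e`, then in every
feasible schedule in which `J` starts no earlier than `t`, the start time of
`J` is at least `s`.  Hence deferring the release time of `J` from `t` to `s`
excludes no feasible schedule among those starting `J` at or after `t`. -/
theorem idle_time_insertion_sound
    {ι : Type*} [Fintype ι] [DecidableEq ι]
    (r d B : ι → ℝ)
    (hB : ∀ j, 0 < B j)
    (J : ι) (t s e : ℝ)
    (hsub : Set.Icc s e ⊆ Set.Icc t (d J))
    (D : ℝ)
    (hD : D = ∑ j ∈ Finset.univ.filter (fun j => j ≠ J ∧ s ≤ r j ∧ d j ≤ e), B j)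
    (hDpos : 0 < D)
    (hover : e < t + B J + D) :
    ∀ sched : ι → ℝ,
      (∀ j, r j ≤ sched j) →
      (∀ j, sched j + B j ≤ d j) →
      (∀ j k, j ≠ k →
        Disjoint (Set.Ico (sched j) (sched j + B j))
                 (Set.Ico (sched k) (sched k + B k))) →
      t ≤ sched J → s ≤ sched J := by
  intro sched hr hd hdisj htJ
  by_contra hcon
  push_neg at hcon
  set F := Finset.univ.filter (fun j => j ≠ J ∧ s ≤ r j ∧ d j ≤ e) with hF
  have hmem : ∀ j ∈ F, j ≠ J ∧ s ≤ r j ∧ d j ≤ e := by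
    intro j hj
    simpa [hF] using hj
  -- each job in F starts at or after sched J + B J
  have hlow : ∀ j ∈ F, sched J + B J ≤ sched j := by
    intro j hj
    obtain ⟨hne, hsr, hde⟩ := hmem j hj
    by_contra hlt
    push_neg at hlt
    have h1 : sched J ≤ sched j := le_of_lt (lt_of_lt_of_le hcon (le_trans hsr (hr j)))
    have hmemJ : sched j ∈ Set.Ico (sched J) (sched J + B J) := ⟨h1, hlt⟩
    have hmemj : sched j ∈ Set.Ico (sched j) (sched j + B j) :=
      ⟨le_refl _, by linarith [hB j]⟩
    exact (hdisj j J hne).ne_of_mem hmemj hmemJ rfl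
  have hsubI : ∀ j ∈ F, Set.Ico (sched j) (sched j + B j) ⊆
      Set.Ico (sched J + B J) e := by
    intro j hj
    obtain ⟨hne, hsr, hde⟩ := hmem j hj
    exact Set.Ico_subset_Ico (hlow j hj) (le_trans (hd j) hde)
  have hpd : (F : Set ι).PairwiseDisjoint
      (fun j => Set.Ico (sched j) (sched j + B j)) := by
    intro j _ k _ hjk
    exact hdisj j k hjk
  have hvol : ∑ j ∈ F, MeasureTheory.volume (Set.Ico (sched j) (sched j + B j))
      = MeasureTheory.volume (⋃ j ∈ F, Set.Ico (sched j) (sched j + B j)) :=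
    (MeasureTheory.measure_biUnion_finset hpd (fun j _ => measurableSet_Ico)).symm
  have hle : MeasureTheory.volume (⋃ j ∈ F, Set.Ico (sched j) (sched j + B j))
      ≤ MeasureTheory.volume (Set.Ico (sched J + B J) e) := by
    apply MeasureTheory.measure_mono
    exact Set.iUnion₂_subset hsubI
  have hsum : ∑ j ∈ F, MeasureTheory.volume (Set.Ico (sched j) (sched j + B j))
      = ENNReal.ofReal D := by
    rw [hD, ENNReal.ofReal_sum_of_nonneg (fun j _ => (hB j).le)]
    simp [Real.volume_Ico]
  have hkey : ENNReal.ofReal D ≤ ENNReal.ofReal (e - (sched J + B J)) := by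
    rw [← hsum, hvol]
    simpa [Real.volume_Ico] using hle
  have hDle : D ≤ e - (sched J + B J) := by
    rcases le_or_gt 0 (e - (sched J + B J)) with h0 | h0
    · exact (ENNReal.ofReal_le_ofReal_iff h0).mp hkey
    · exfalso
      rw [ENNReal.ofReal_eq_zero.mpr h0.le] at hkey
      have := ENNReal.ofReal_pos.mpr hDpos
      exact absurd (le_antisymm hkey zero_le) (ne_of_gt this)
  linarith
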